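/- Let H be a perfect Abelian Polish group in which all elements have order at most 2. Then for any nonempty open sets U₀,…,Uₙ ⊆ H with n ≥ 7, there exist nonempty open sets Vᵢ ⊆ Uᵢ (i ≤ n) that are pairwise disjoint and form a qif⁻: for every choice of bᵢ ∈ Vᵢ (i ≤ n), the set {bᵢ : i ≤ n} is quasi⁻ independent. -/

import Mathlib

open Filter


def QuasiNegIndep {H : Type*} [AddCommGroup H] (B : Set H) : Prop :=
  8 ≤ B.encard ∧
  ∀ (b : Fin 8 → H) (e : Fin 8 → ℕ),
    Function.Injective b → (∀ i, b i ∈ B) → (∀ i, e i ≤ 1) → (∃ i, e i ≠ 0) →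
    ∑ i, e i • b i ≠ 0

/-- In a T1 space that is perfect, every nonempty open set is infinite. -/
lemma open_infinite_of_perfect {H : Type*} [TopologicalSpace H] [T1Space H]
    (hperf : Perfect (Set.univ : Set H)) {U : Set H} (hU : IsOpen U)
    (hne : U.Nonempty) : U.Infinite := by
  obtain ⟨x, hx⟩ := hne
  have hacc : AccPt x (𝓟 (Set.univ : Set H)) := hperf.acc x (Set.mem_univ x)
  haveI : Filter.NeBot (nhdsWithin x {x}ᶜ) := by
    simpa [AccPt, Filter.principal_univ] using hacc
  exact infinite_of_mem_nhds x (hU.mem_nhds hx)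

/-- Construction of linearly independent (over 𝔽₂) points in given open sets. -/
lemma exists_indep_points {H : Type*} [AddCommGroup H] [TopologicalSpace H] [T1Space H]
    (hperf : Perfect (Set.univ : Set H)) (hexp : ∀ a : H, a + a = 0) :
    ∀ (m : ℕ) (U : Fin m → Set H), (∀ i, IsOpen (U i)) → (∀ i, (U i).Nonempty) →
      ∃ a : Fin m → H, (∀ i, a i ∈ U i) ∧
        ∀ S : Finset (Fin m), S.Nonempty → ∑ i ∈ S, a i ≠ 0 := by
  classical
  intro m
  induction m with
  | zero =>
    intro U _ _
    refine ⟨Fin.elim0, fun i => i.elim0, fun S hS => ?_⟩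
    obtain ⟨i, _⟩ := hS
    exact i.elim0
  | succ m ih =>
    intro U hUo hUne
    obtain ⟨a', ha'U, ha'sum⟩ := ih (fun i => U i.castSucc) (fun i => hUo _) (fun i => hUne _)
    set F : Finset H := Finset.univ.image (fun T : Finset (Fin m) => ∑ i ∈ T, a' i) with hF
    have hinf : (U (Fin.last m)).Infinite :=
      open_infinite_of_perfect hperf (hUo _) (hUne _)
    obtain ⟨c, hc⟩ := (hinf.diff F.finite_toSet).nonempty
    have hcU : c ∈ U (Fin.last m) := hc.1
    have hcF : ∀ T : Finset (Fin m), c ≠ ∑ i ∈ T, a' i := by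
      intro T hT
      exact hc.2 (by simp [hF]; exact ⟨T, hT.symm⟩)
    refine ⟨Fin.snoc a' c, ?_, ?_⟩
    · intro i
      refine Fin.lastCases ?_ ?_ i
      · simpa using hcU
      · intro j; simpa using ha'U j
    · intro S hSne
      set T : Finset (Fin m) := Finset.univ.filter (fun j : Fin m => j.castSucc ∈ S) with hT
      have herase : S.erase (Fin.last m) = T.image Fin.castSucc := by
        ext i
        simp only [Finset.mem_erase, Finset.mem_image, hT, Finset.mem_filter,
          Finset.mem_univ, true_and]
        constructor
        · rintro ⟨hne, hi⟩
          obtain ⟨j, rfl⟩ := Fin.eq_castSucc_of_ne_last hne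
          exact ⟨j, hi, rfl⟩
        · rintro ⟨j, hj, rfl⟩
          exact ⟨(Fin.castSucc_lt_last j).ne, hj⟩
      have hTsum : ∑ i ∈ T.image Fin.castSucc, Fin.snoc a' c i = ∑ j ∈ T, a' j := by
        rw [Finset.sum_image (fun x _ y _ h => Fin.castSucc_injective m h)]
        exact Finset.sum_congr rfl (fun j _ => by simp)
      by_cases hlast : Fin.last m ∈ S
      · rw [← Finset.add_sum_erase S (Fin.snoc a' c) hlast, herase, hTsum]
        simp only [Fin.snoc_last]
        intro h0
        have : c = ∑ j ∈ T, a' j := by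
          have hneg : -(∑ j ∈ T, a' j) = ∑ j ∈ T, a' j :=
            neg_eq_of_add_eq_zero_left (hexp _)
          have := eq_neg_of_add_eq_zero_left h0
          rw [hneg] at this
          exact this
        exact hcF T this
      · have hS' : S = T.image Fin.castSucc := by
          rw [← herase, Finset.erase_eq_of_notMem hlast]
        rw [hS', hTsum]
        have hTne : T.Nonempty := by
          by_contra h
          rw [Finset.not_nonempty_iff_eq_empty] at h
          rw [hS', h] at hSne
          simp at hSne
        exact ha'sum T hTne

theorem exists_qifNeg {H : Type*} [AddCommGroup H]
    [TopologicalSpace H] [IsTopologicalAddGroup H] [PolishSpace H]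
    (hperf : Perfect (Set.univ : Set H)) (hexp : ∀ a : H, a + a = 0)
    (n : ℕ) (hn : 7 ≤ n) (U : Fin (n + 1) → Set H)
    (hUo : ∀ i, IsOpen (U i)) (hUne : ∀ i, (U i).Nonempty) :
    ∃ V : Fin (n + 1) → Set H,
      (∀ i, IsOpen (V i)) ∧ (∀ i, (V i).Nonempty) ∧ (∀ i, V i ⊆ U i) ∧
      Pairwise (Function.onFun Disjoint V) ∧
      ∀ b : Fin (n + 1) → H, (∀ i, b i ∈ V i) → QuasiNegIndep (Set.range b) := by
  letI := TopologicalSpace.upgradeIsCompletelyMetrizable H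
  obtain ⟨a, haU, hasum⟩ := exists_indep_points hperf hexp (n + 1) U hUo hUne
  -- a is injective
  have hainj : Function.Injective a := by
    intro i j hij
    by_contra hne
    have h2 : ({i, j} : Finset (Fin (n + 1))).Nonempty := ⟨i, by simp⟩
    have := hasum {i, j} h2
    rw [Finset.sum_pair hne, hij] at this
    exact this (hexp (a j))
  -- pairwise disjoint balls
  have h01 : (0 : Fin (n + 1)) ≠ 1 := by
    intro h
    have := congrArg Fin.val h
    simp [Fin.val_one'] at this
    omega
  set P : Finset (Fin (n + 1) × Fin (n + 1)) :=
    Finset.univ.filter (fun p => p.1 ≠ p.2) with hP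
  have hPne : P.Nonempty := ⟨(0, 1), Finset.mem_filter.mpr ⟨Finset.mem_univ _, h01⟩⟩
  set D : Finset ℝ := P.image (fun p => dist (a p.1) (a p.2)) with hD
  have hDne : D.Nonempty := hPne.image _
  set r : ℝ := D.min' hDne / 2 with hr
  have hrpos : 0 < r := by
    have hmin : 0 < D.min' hDne := by
      have hmem := D.min'_mem hDne
      obtain ⟨p, hp, hpe⟩ := Finset.mem_image.mp hmem
      have hne : p.1 ≠ p.2 := (Finset.mem_filter.mp hp).2
      rw [← hpe]
      exact dist_pos.mpr (fun h => hne (hainj h))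
    rw [hr]; linarith
  have hballdisj : ∀ i j : Fin (n + 1), i ≠ j →
      Disjoint (Metric.ball (a i) r) (Metric.ball (a j) r) := by
    intro i j hij
    apply Metric.ball_disjoint_ball
    have hmem : dist (a i) (a j) ∈ D :=
      Finset.mem_image_of_mem (fun p : Fin (n + 1) × Fin (n + 1) => dist (a p.1) (a p.2))
        (Finset.mem_filter.mpr ⟨Finset.mem_univ ((i, j) : Fin (n + 1) × Fin (n + 1)), hij⟩)
    have := D.min'_le _ hmem
    rw [hr]; linarith
  -- the open set of "good" tuples
  set W : Set (Fin (n + 1) → H) :=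
    ⋂ S : Finset (Fin (n + 1)), {b | S.Nonempty → ∑ i ∈ S, b i ≠ 0} with hW
  have hWo : IsOpen W := by
    rw [hW]
    refine isOpen_iInter_of_finite (fun S => ?_)
    by_cases hS : S.Nonempty
    · have hcont : Continuous (fun b : Fin (n + 1) → H => ∑ i ∈ S, b i) :=
        continuous_finset_sum S (fun i _ => continuous_apply i)
      have : {b : Fin (n + 1) → H | S.Nonempty → ∑ i ∈ S, b i ≠ 0}
          = (fun b : Fin (n + 1) → H => ∑ i ∈ S, b i) ⁻¹' {0}ᶜ := by
        ext b; simp [hS]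
      rw [this]
      exact (isClosed_singleton.isOpen_compl).preimage hcont
    · have : {b : Fin (n + 1) → H | S.Nonempty → ∑ i ∈ S, b i ≠ 0} = Set.univ := by
        ext b; simp [hS]
      rw [this]; exact isOpen_univ
  have haW : a ∈ W := by
    rw [hW]
    exact Set.mem_iInter.mpr (fun S hS => hasum S hS)
  obtain ⟨I, u, hu, husub⟩ := isOpen_pi_iff.mp hWo a haW
  classical
  set u' : Fin (n + 1) → Set H := fun i => if i ∈ I then u i else Set.univ with hu'
  have hu'o : ∀ i, IsOpen (u' i) := by
    intro i
    by_cases hi : i ∈ I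
    · simpa [hu', hi] using (hu i hi).1
    · simp [hu', hi]
  have hau' : ∀ i, a i ∈ u' i := by
    intro i
    by_cases hi : i ∈ I
    · simpa [hu', hi] using (hu i hi).2
    · simp [hu', hi]
  set V : Fin (n + 1) → Set H := fun i => U i ∩ Metric.ball (a i) r ∩ u' i with hV
  have hVsub : ∀ i, V i ⊆ U i := fun i => fun x hx => hx.1.1
  have hVW : ∀ b : Fin (n + 1) → H, (∀ i, b i ∈ V i) →
      ∀ S : Finset (Fin (n + 1)), S.Nonempty → ∑ i ∈ S, b i ≠ 0 := by
    intro b hb S hS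
    have hbW : b ∈ W := by
      apply husub
      intro i hi
      have hi' : i ∈ I := hi
      simpa [hu', hi'] using (hb i).2
    rw [hW] at hbW
    exact Set.mem_iInter.mp hbW S hS
  refine ⟨V, ?_, ?_, hVsub, ?_, ?_⟩
  · intro i
    exact ((hUo i).inter Metric.isOpen_ball).inter (hu'o i)
  · intro i
    exact ⟨a i, ⟨haU i, Metric.mem_ball_self hrpos⟩, hau' i⟩
  · intro i j hij
    exact ((hballdisj i j hij).mono (fun x hx => hx.1.2) (fun x hx => hx.1.2))
  · intro b hb
    have hbinj : Function.Injective b := by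
      intro i j hij
      by_contra hne
      have : Disjoint (V i) (V j) := by
        refine ((hballdisj i j hne).mono (fun x hx => hx.1.2) (fun x hx => hx.1.2))
      exact (Set.disjoint_left.mp this (hb i)) (hij ▸ hb j)
    constructor
    · -- cardinality
      have h8 : (8 : ℕ) ≤ n + 1 := by omega
      set g : Fin 8 → H := fun i => b (Fin.castLE h8 i) with hg
      have hginj : Function.Injective g :=
        hbinj.comp (Fin.castLE_injective h8)
      have hsub : Set.range g ⊆ Set.range b := by
        rintro x ⟨i, rfl⟩; exact ⟨Fin.castLE h8 i, rfl⟩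
      have : (Set.range g).encard = 8 := by
        rw [← Set.image_univ, hginj.encard_image _, Set.encard_univ]
        simp
      calc (8 : ℕ∞) = (Set.range g).encard := this.symm
        _ ≤ (Set.range b).encard := Set.encard_le_encard hsub
    · -- quasi-independence
      intro c e hcinj hcmem he hene
      have hσ : ∀ i : Fin 8, ∃ j, b j = c i := fun i => hcmem i
      choose σ hσ using hσ
      have hσinj : Function.Injective σ := by
        intro i j hij
        apply hcinj
        rw [← hσ i, ← hσ j, hij]
      set T : Finset (Fin 8) := Finset.univ.filter (fun i => e i ≠ 0) with hTdef
      have hsum1 : ∑ i, e i • c i = ∑ i ∈ T, e i • c i := by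
        symm
        apply Finset.sum_subset (Finset.subset_univ T)
        intro i _ hiT
        have : e i = 0 := by
          by_contra h
          exact hiT (by simp [hTdef, h])
        simp [this]
      have hsum2 : ∑ i ∈ T, e i • c i = ∑ i ∈ T, b (σ i) := by
        apply Finset.sum_congr rfl
        intro i hi
        have hei : e i = 1 := by
          have h1 : e i ≠ 0 := by simpa [hTdef] using hi
          have := he i
          omega
        rw [hei, one_smul, hσ i]
      have hsum3 : ∑ i ∈ T, b (σ i) = ∑ j ∈ T.image σ, b j := by
        rw [Finset.sum_image (fun x _ y _ h => hσinj h)]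
      have hTne : T.Nonempty := by
        obtain ⟨i, hi⟩ := hene
        exact ⟨i, by simp [hTdef, hi]⟩
      rw [hsum1, hsum2, hsum3]
      exact hVW b hb (T.image σ) (hTne.image σ)
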